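/- arXiv:2107.07637 — 5 statements merged into one kernel-verified Lean document; each statement's English description precedes it below -/
import Mathlib

section
/- For every integer m ≥ 7, the number of pairs (ℓ, k) with ℓ a positive integer and k an integer such that ℓ² + P_m(k) = 3 is zero, and the number of such pairs with 2ℓ² + P_m(k) = 3 is exactly one (namely (ℓ,k) = (1,1)). -/
/-- Sum of odd divisors: `σ_odd n = ∑_{d ∣ n, d odd} d` for `n > 0`, and `0` for `n ≤ 0`. -/
def sigmaOdd (n : ℤ) : ℤ :=
  if 0 < n then ∑ d ∈ n.toNat.divisors.filter (fun d => Odd d), (d : ℤ) else 0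

/-- The `k`-th generalized `m`-gonal number `P_m(k) = ((m-2)k² - (m-4)k)/2`. -/
def Pgon (m k : ℤ) : ℤ := ((m - 2) * k ^ 2 - (m - 4) * k) / 2

lemma two_mul_Pgon (m k : ℤ) : 2 * Pgon m k = (m - 2) * k ^ 2 - (m - 4) * k := by
  have h2 : (2 : ℤ) ∣ (m - 2) * k ^ 2 - (m - 4) * k := by
    rcases Int.even_or_odd k with ⟨c, hc⟩ | ⟨c, hc⟩
    · exact ⟨(m - 2) * 2 * c ^ 2 - (m - 4) * c, by subst hc; ring⟩
    · exact ⟨(m - 2) * (2 * c ^ 2 + 2 * c) - (m - 4) * c + 1, by subst hc; ring⟩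
  unfold Pgon
  exact Int.mul_ediv_cancel' h2

lemma Pgon_big (m k : ℤ) (hm : 7 ≤ m) (hk0 : k ≠ 0) (hk1 : k ≠ 1) : 4 ≤ Pgon m k := by
  have h := two_mul_Pgon m k
  rcases lt_or_ge k 0 with h1 | h1
  · nlinarith [sq_nonneg k, sq_nonneg (k + 1), mul_pos (by linarith : (0:ℤ) < -k) (by linarith : (0:ℤ) < m - 4)]
  · have h2 : 2 ≤ k := by omega
    nlinarith [sq_nonneg (k - 1), mul_nonneg (by linarith : (0:ℤ) ≤ k - 2) (by linarith : (0:ℤ) ≤ m - 4)]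

theorem counts_at_three (m : ℤ) (hm : 7 ≤ m) :
    {p : ℤ × ℤ | 0 < p.1 ∧ p.1 ^ 2 + Pgon m p.2 = 3} = ∅ ∧
    {p : ℤ × ℤ | 0 < p.1 ∧ 2 * p.1 ^ 2 + Pgon m p.2 = 3} = {(1, 1)} := by
  have key : ∀ l k : ℤ, 0 < l → (l ^ 2 + Pgon m k = 3 → False) ∧
      (2 * l ^ 2 + Pgon m k = 3 → l = 1 ∧ k = 1) := by
    intro l k hl
    have hs1 : 1 ≤ l ^ 2 := by nlinarith
    have hs4 : (l = 1 ∧ l ^ 2 = 1) ∨ 4 ≤ l ^ 2 := by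
      rcases lt_or_ge l 2 with h | h
      · have : l = 1 := by omega
        subst this; left; exact ⟨rfl, one_pow 2⟩
      · right; nlinarith
    obtain ⟨s, hs⟩ : ∃ s, l ^ 2 = s := ⟨_, rfl⟩
    rw [hs] at hs1 hs4 ⊢
    by_cases hk0 : k = 0
    · subst hk0
      have : Pgon m 0 = 0 := by simp [Pgon]
      rw [this]; constructor <;> intro h2 <;> omega
    by_cases hk1 : k = 1
    · subst hk1
      have h : 2 * Pgon m 1 = 2 := by rw [two_mul_Pgon]; ring
      have : Pgon m 1 = 1 := by linarith
      rw [this]; constructor <;> intro h2 <;> omega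
    · have := Pgon_big m k hm hk0 hk1
      constructor <;> intro h <;> omega
  constructor
  · ext ⟨l, k⟩
    simp only [Set.mem_setOf_eq, Set.mem_empty_iff_false, iff_false, not_and]
    intro hl heq
    exact (key l k hl).1 heq
  · ext ⟨l, k⟩
    simp only [Set.mem_setOf_eq, Set.mem_singleton_iff, Prod.mk.injEq]
    constructor
    · rintro ⟨hl, heq⟩
      exact (key l k hl).2 heq
    · rintro ⟨rfl, rfl⟩
      have h : 2 * Pgon m 1 = 2 := by rw [two_mul_Pgon]; ring
      have : Pgon m 1 = 1 := by linarith
      refine ⟨one_pos, by rw [this]; ring⟩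
end

section
/- For every positive integer n, ∑_{k ∈ ℤ} σ_odd(n - P_m(k)) ≡ a_m(n) + b_m(n) (mod 2), where a_m(n) = #{(ℓ,k) ∈ ℤ⁺ × ℤ : ℓ² + P_m(k) = n} and b_m(n) = #{(ℓ,k) ∈ ℤ⁺ × ℤ : 2ℓ² + P_m(k) = n}, for any integer m ≥ 3. -/
lemma odd_cast_zmod {d : ℕ} (hd : Odd d) : (d : ZMod 2) = 1 := by
  obtain ⟨c, rfl⟩ := hd
  push_cast
  have h2 : (2 : ZMod 2) = 0 := by decide
  rw [h2]
  ring

lemma sum_divisors_zmod {M : ℕ} (hpos : 0 < M) (hodd : Odd M) :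
    (∑ d ∈ M.divisors, (d : ZMod 2)) = if IsSquare M then 1 else 0 := by
  have hMne : M ≠ 0 := hpos.ne'
  have hodd_div : ∀ d, d ∈ M.divisors → Odd d := by
    intro d hd
    rw [Nat.mem_divisors] at hd
    rcases Nat.even_or_odd d with he | h
    · exact absurd (((even_iff_two_dvd.mp he).trans hd.1)) (by
        rw [← even_iff_two_dvd]; exact Nat.not_even_iff_odd.mpr hodd)
    · exact h
  have hmemdiv : ∀ d, d ∈ M.divisors → M / d ∈ M.divisors := by
    intro d hd
    rw [Nat.mem_divisors] at hd ⊢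
    exact ⟨⟨d, (Nat.div_mul_cancel hd.1).symm⟩, hMne⟩
  have hfix : ∀ d, d ∈ M.divisors → M / d = d → d * d = M := by
    intro d hd h
    have := Nat.div_mul_cancel (Nat.mem_divisors.mp hd).1
    rw [h] at this
    exact this
  by_cases hsq : IsSquare M
  · obtain ⟨s, hs⟩ := hsq
    have hs0 : 0 < s := by
      rcases Nat.eq_zero_or_pos s with rfl | h
      · simp [hs] at hpos
      · exact h
    have hsd : s ∈ M.divisors := Nat.mem_divisors.2 ⟨⟨s, hs⟩, hMne⟩
    rw [if_pos ⟨s, hs⟩, ← Finset.add_sum_erase _ _ hsd]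
    have h0 : ∑ d ∈ M.divisors.erase s, (d : ZMod 2) = 0 := by
      refine Finset.sum_involution (fun d _ => M / d) ?_ ?_ ?_ ?_
      · intro d hd
        have hd' := Finset.mem_of_mem_erase hd
        rw [odd_cast_zmod (hodd_div d hd'), odd_cast_zmod (hodd_div _ (hmemdiv d hd'))]
        decide
      · intro d hd _ hfp
        have hd' := Finset.mem_of_mem_erase hd
        have : d * d = s * s := by rw [hfix d hd' hfp, hs]
        exact (Finset.ne_of_mem_erase hd) (Nat.mul_self_inj.mp this)
      · intro d hd
        have hd' := Finset.mem_of_mem_erase hd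
        refine Finset.mem_erase.2 ⟨?_, hmemdiv d hd'⟩
        intro hMs
        have hMs' : M / d = s := hMs
        have h1 := Nat.div_mul_cancel (Nat.mem_divisors.mp hd').1
        rw [hMs', hs] at h1
        exact (Finset.ne_of_mem_erase hd) (Nat.eq_of_mul_eq_mul_left hs0 h1)
      · intro d hd
        exact Nat.div_div_self (Nat.mem_divisors.mp (Finset.mem_of_mem_erase hd)).1 hMne
    rw [h0, add_zero, odd_cast_zmod (hodd_div s hsd)]
  · rw [if_neg hsq]
    refine Finset.sum_involution (fun d _ => M / d) ?_ ?_ ?_ ?_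
    · intro d hd
      rw [odd_cast_zmod (hodd_div d hd), odd_cast_zmod (hodd_div _ (hmemdiv d hd))]
      decide
    · intro d hd _ hfp
      exact absurd ⟨d, (hfix d hd hfp).symm⟩ hsq
    · intro d hd; exact hmemdiv d hd
    · intro d hd
      exact Nat.div_div_self (Nat.mem_divisors.mp hd).1 hMne

lemma filter_odd_divisors (M : ℕ) (hM : M ≠ 0) :
    M.divisors.filter (fun d => Odd d) = (ordCompl[2] M).divisors := by
  ext d
  simp only [Finset.mem_filter, Nat.mem_divisors]
  constructor
  · rintro ⟨⟨hdvd, _⟩, hodd⟩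
    refine ⟨?_, (Nat.ordCompl_pos 2 hM).ne'⟩
    have hcop : Nat.Coprime d (2 ^ M.factorization 2) :=
      Nat.Coprime.pow_right _ (Nat.coprime_two_right.mpr hodd)
    have hd2 : d ∣ 2 ^ M.factorization 2 * ordCompl[2] M := by
      rw [Nat.ordProj_mul_ordCompl_eq_self]; exact hdvd
    exact (Nat.Coprime.dvd_of_dvd_mul_left hcop hd2)
  · rintro ⟨hdvd, _⟩
    refine ⟨⟨hdvd.trans (Nat.ordCompl_dvd M 2), hM⟩, ?_⟩
    rcases Nat.even_or_odd d with he | h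
    · exact absurd ((even_iff_two_dvd.mp he).trans hdvd) (Nat.not_dvd_ordCompl Nat.prime_two hM)
    · exact h

lemma odd_factorization_two_eq {z : ℕ} (hz : Odd z) (c : ℕ) :
    (2 ^ c * z).factorization 2 = c := by
  have hz0 : z ≠ 0 := by rintro rfl; simp at hz
  have h2z : ¬(2 ∣ z) := by
    obtain ⟨e, he⟩ := hz
    omega
  rw [Nat.factorization_mul (pow_ne_zero _ two_ne_zero) hz0]
  simp [Nat.Prime.factorization_pow Nat.prime_two,
    Nat.factorization_eq_zero_of_not_dvd h2z]

lemma unique_decomp {a b x y : ℕ} (hx : Odd x) (hy : Odd y)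
    (h : 2 ^ a * x = 2 ^ b * y) : a = b ∧ x = y := by
  have hab : a = b := by
    have h1 := odd_factorization_two_eq hx a
    have h2 := odd_factorization_two_eq hy b
    rw [h, h2] at h1
    exact h1.symm
  subst hab
  exact ⟨rfl, Nat.eq_of_mul_eq_mul_left (pow_pos two_pos a) h⟩

lemma ordCompl_odd {M : ℕ} (hM : M ≠ 0) : Odd (ordCompl[2] M) := by
  rcases Nat.even_or_odd (ordCompl[2] M) with he | h
  · exact absurd (even_iff_two_dvd.mp he) (Nat.not_dvd_ordCompl Nat.prime_two hM)
  · exact h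

lemma sq_iff (M : ℕ) (hM : M ≠ 0) :
    (∃ t : ℕ, 0 < t ∧ t ^ 2 = M) ↔
      IsSquare (ordCompl[2] M) ∧ Even (M.factorization 2) := by
  have hdecomp : 2 ^ M.factorization 2 * ordCompl[2] M = M :=
    Nat.ordProj_mul_ordCompl_eq_self M 2
  have hModd : Odd (ordCompl[2] M) := ordCompl_odd hM
  constructor
  · rintro ⟨t, ht, hteq⟩
    have ht0 : t ≠ 0 := ht.ne'
    have hudec : 2 ^ t.factorization 2 * ordCompl[2] t = t :=
      Nat.ordProj_mul_ordCompl_eq_self t 2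
    have huodd : Odd (ordCompl[2] t) := ordCompl_odd ht0
    have hsq : 2 ^ (2 * t.factorization 2) * (ordCompl[2] t) ^ 2
        = 2 ^ M.factorization 2 * ordCompl[2] M := by
      rw [hdecomp, ← hteq]
      conv_rhs => rw [← hudec]
      ring
    obtain ⟨hab, hxy⟩ := unique_decomp (huodd.pow) hModd hsq
    exact ⟨⟨ordCompl[2] t, by rw [← hxy]; ring⟩, ⟨t.factorization 2, by omega⟩⟩
  · rintro ⟨⟨u, hu⟩, ⟨b, hb⟩⟩
    have hu0 : 0 < u := by
      rcases Nat.eq_zero_or_pos u with rfl | h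
      · exfalso
        have := Nat.ordCompl_pos 2 hM
        omega
      · exact h
    refine ⟨2 ^ b * u, by positivity, ?_⟩
    rw [← hdecomp, hu, hb]
    ring
  
lemma two_sq_iff (M : ℕ) (hM : M ≠ 0) :
    (∃ t : ℕ, 0 < t ∧ 2 * t ^ 2 = M) ↔
      IsSquare (ordCompl[2] M) ∧ Odd (M.factorization 2) := by
  have hdecomp : 2 ^ M.factorization 2 * ordCompl[2] M = M :=
    Nat.ordProj_mul_ordCompl_eq_self M 2
  have hModd : Odd (ordCompl[2] M) := ordCompl_odd hM
  constructor
  · rintro ⟨t, ht, hteq⟩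
    have ht0 : t ≠ 0 := ht.ne'
    have hudec : 2 ^ t.factorization 2 * ordCompl[2] t = t :=
      Nat.ordProj_mul_ordCompl_eq_self t 2
    have huodd : Odd (ordCompl[2] t) := ordCompl_odd ht0
    have hsq : 2 ^ (2 * t.factorization 2 + 1) * (ordCompl[2] t) ^ 2
        = 2 ^ M.factorization 2 * ordCompl[2] M := by
      rw [hdecomp, ← hteq]
      conv_rhs => rw [← hudec]
      ring
    obtain ⟨hab, hxy⟩ := unique_decomp (huodd.pow) hModd hsq
    exact ⟨⟨ordCompl[2] t, by rw [← hxy]; ring⟩, ⟨t.factorization 2, by omega⟩⟩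
  · rintro ⟨⟨u, hu⟩, ⟨b, hb⟩⟩
    have hu0 : 0 < u := by
      rcases Nat.eq_zero_or_pos u with rfl | h
      · exfalso
        have := Nat.ordCompl_pos 2 hM
        omega
      · exact h
    refine ⟨2 ^ b * u, by positivity, ?_⟩
    rw [← hdecomp, hu, hb]
    ring

open Classical in
lemma sigmaOdd_cast (N : ℤ) :
    (sigmaOdd N : ZMod 2) =
      (if ∃ ℓ : ℤ, 0 < ℓ ∧ ℓ ^ 2 = N then 1 else 0) +
      (if ∃ ℓ : ℤ, 0 < ℓ ∧ 2 * ℓ ^ 2 = N then 1 else 0) := by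
  by_cases hN : 0 < N
  · set M := N.toNat with hMdef
    have hM0 : M ≠ 0 := by simp [hMdef]; omega
    have hNM : (M : ℤ) = N := Int.toNat_of_nonneg hN.le
    have bridgeA : (∃ ℓ : ℤ, 0 < ℓ ∧ ℓ ^ 2 = N) ↔ (∃ t : ℕ, 0 < t ∧ t ^ 2 = M) := by
      constructor
      · rintro ⟨ℓ, hℓ, h⟩
        refine ⟨ℓ.toNat, by omega, ?_⟩
        have h2 : ((ℓ.toNat : ℤ)) ^ 2 = (M : ℤ) := by
          rw [Int.toNat_of_nonneg hℓ.le, hNM]; exact h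
        exact_mod_cast h2
      · rintro ⟨t, ht, h⟩
        exact ⟨(t : ℤ), by exact_mod_cast ht, by rw [← hNM]; exact_mod_cast h⟩
    have bridgeB : (∃ ℓ : ℤ, 0 < ℓ ∧ 2 * ℓ ^ 2 = N) ↔ (∃ t : ℕ, 0 < t ∧ 2 * t ^ 2 = M) := by
      constructor
      · rintro ⟨ℓ, hℓ, h⟩
        refine ⟨ℓ.toNat, by omega, ?_⟩
        have h2 : 2 * ((ℓ.toNat : ℤ)) ^ 2 = (M : ℤ) := by
          rw [Int.toNat_of_nonneg hℓ.le, hNM]; exact h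
        exact_mod_cast h2
      · rintro ⟨t, ht, h⟩
        exact ⟨(t : ℤ), by exact_mod_cast ht, by rw [← hNM]; exact_mod_cast h⟩
    rw [sigmaOdd, if_pos hN]
    push_cast
    rw [show N.toNat = M from rfl, filter_odd_divisors M hM0,
      sum_divisors_zmod (Nat.ordCompl_pos 2 hM0) (ordCompl_odd hM0)]
    by_cases hsq : IsSquare (ordCompl[2] M)
    · rcases Nat.even_or_odd (M.factorization 2) with hev | hod
      · rw [if_pos hsq, if_pos (bridgeA.mpr ((sq_iff M hM0).mpr ⟨hsq, hev⟩)),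
          if_neg, add_zero]
        intro hB
        have := ((two_sq_iff M hM0).mp (bridgeB.mp hB)).2
        exact (Nat.not_even_iff_odd.mpr this) hev
      · rw [if_pos hsq, if_pos (bridgeB.mpr ((two_sq_iff M hM0).mpr ⟨hsq, hod⟩)),
          if_neg, zero_add]
        intro hA
        have := ((sq_iff M hM0).mp (bridgeA.mp hA)).2
        exact (Nat.not_even_iff_odd.mpr hod) this
    · rw [if_neg hsq, if_neg, if_neg, add_zero]
      · intro hB
        exact hsq ((two_sq_iff M hM0).mp (bridgeB.mp hB)).1
      · intro hA
        exact hsq ((sq_iff M hM0).mp (bridgeA.mp hA)).1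
  · rw [sigmaOdd, if_neg hN, if_neg, if_neg]
    · simp
    · rintro ⟨ℓ, hℓ, h⟩
      nlinarith
    · rintro ⟨ℓ, hℓ, h⟩
      nlinarith

lemma pgon_decomp (m k : ℤ) : ∃ t : ℤ, k ^ 2 - k = 2 * t ∧ Pgon m k = (m - 2) * t + k := by
  obtain ⟨t, ht⟩ := Int.even_mul_succ_self (k - 1)
  have h1 : k ^ 2 - k = 2 * t := by nlinarith [ht]
  refine ⟨t, h1, ?_⟩
  rw [Pgon]
  have h2 : (m - 2) * k ^ 2 - (m - 4) * k = 2 * ((m - 2) * t + k) := by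
    linear_combination (m - 2) * h1
  rw [h2, Int.mul_ediv_cancel_left _ two_ne_zero]

lemma pgon_lb (m k : ℤ) (hm : 3 ≤ m) : k ^ 2 + k ≤ 2 * Pgon m k := by
  obtain ⟨t, ht, hP⟩ := pgon_decomp m k
  have ht0 : 0 ≤ t := by nlinarith [sq_nonneg (2 * k - 1)]
  have hmt : t ≤ (m - 2) * t := by nlinarith
  rw [hP]; linarith

lemma sigmaOdd_nonpos {N : ℤ} (h : N ≤ 0) : sigmaOdd N = 0 := if_neg (not_lt.mpr h)

lemma pgon_big (m k n : ℤ) (hm : 3 ≤ m) (hn : 0 < n)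
    (hk : k ∉ Finset.Icc (-(2 * n)) (2 * n)) : n ≤ Pgon m k := by
  rw [Finset.mem_Icc] at hk
  push_neg at hk
  have hlb := pgon_lb m k hm
  have hbig : 2 * n ≤ k ^ 2 + k := by
    rcases lt_or_ge k (-(2 * n)) with h | h
    · nlinarith
    · have h2 := hk h
      nlinarith [sq_nonneg k]
  linarith

theorem sum_sigmaOdd_congr_counts (m : ℤ) (hm : 3 ≤ m) (n : ℤ) (hn : 0 < n) :
    (∑ᶠ k : ℤ, sigmaOdd (n - Pgon m k)) ≡
      ((Set.ncard {p : ℤ × ℤ | 0 < p.1 ∧ p.1 ^ 2 + Pgon m p.2 = n} : ℤ) +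
       (Set.ncard {p : ℤ × ℤ | 0 < p.1 ∧ 2 * p.1 ^ 2 + Pgon m p.2 = n} : ℤ)) [ZMOD 2] := by
  classical
  set I : Finset ℤ := Finset.Icc (-(2 * n)) (2 * n) with hI
  have hsupp : Function.support (fun k => sigmaOdd (n - Pgon m k)) ⊆ ↑I := by
    intro k hk
    by_contra hni
    exact hk (sigmaOdd_nonpos (by linarith [pgon_big m k n hm hn hni]))
  have cardA : ({p : ℤ × ℤ | 0 < p.1 ∧ p.1 ^ 2 + Pgon m p.2 = n}).ncard
      = (I.filter (fun k => ∃ ℓ : ℤ, 0 < ℓ ∧ ℓ ^ 2 = n - Pgon m k)).card := by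
    have hinj : Set.InjOn Prod.snd {p : ℤ × ℤ | 0 < p.1 ∧ p.1 ^ 2 + Pgon m p.2 = n} := by
      rintro ⟨a, k⟩ ⟨ha, hak⟩ ⟨b, k'⟩ ⟨hb, hbk⟩ h
      simp only [Prod.mk.injEq] at h ⊢
      refine ⟨?_, h⟩
      subst h
      nlinarith
    have himg : Prod.snd '' {p : ℤ × ℤ | 0 < p.1 ∧ p.1 ^ 2 + Pgon m p.2 = n}
        = ↑(I.filter fun k => ∃ ℓ : ℤ, 0 < ℓ ∧ ℓ ^ 2 = n - Pgon m k) := by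
      ext k
      simp only [Set.mem_image, Set.mem_setOf_eq, Finset.coe_filter, Prod.exists]
      constructor
      · rintro ⟨a, k', ⟨ha, hak⟩, rfl⟩
        refine ⟨?_, a, ha, by linarith⟩
        by_contra hkI
        have := pgon_big m k' n hm hn hkI
        nlinarith
      · rintro ⟨hkI, ℓ, hℓ, hℓ2⟩
        exact ⟨ℓ, k, ⟨hℓ, by linarith⟩, rfl⟩
    rw [← Set.ncard_coe_finset, ← himg, Set.ncard_image_of_injOn hinj]
  have cardB : ({p : ℤ × ℤ | 0 < p.1 ∧ 2 * p.1 ^ 2 + Pgon m p.2 = n}).ncard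
      = (I.filter (fun k => ∃ ℓ : ℤ, 0 < ℓ ∧ 2 * ℓ ^ 2 = n - Pgon m k)).card := by
    have hinj : Set.InjOn Prod.snd {p : ℤ × ℤ | 0 < p.1 ∧ 2 * p.1 ^ 2 + Pgon m p.2 = n} := by
      rintro ⟨a, k⟩ ⟨ha, hak⟩ ⟨b, k'⟩ ⟨hb, hbk⟩ h
      simp only [Prod.mk.injEq] at h ⊢
      refine ⟨?_, h⟩
      subst h
      nlinarith
    have himg : Prod.snd '' {p : ℤ × ℤ | 0 < p.1 ∧ 2 * p.1 ^ 2 + Pgon m p.2 = n}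
        = ↑(I.filter fun k => ∃ ℓ : ℤ, 0 < ℓ ∧ 2 * ℓ ^ 2 = n - Pgon m k) := by
      ext k
      simp only [Set.mem_image, Set.mem_setOf_eq, Finset.coe_filter, Prod.exists]
      constructor
      · rintro ⟨a, k', ⟨ha, hak⟩, rfl⟩
        refine ⟨?_, a, ha, by linarith⟩
        by_contra hkI
        have := pgon_big m k' n hm hn hkI
        nlinarith
      · rintro ⟨hkI, ℓ, hℓ, hℓ2⟩
        exact ⟨ℓ, k, ⟨hℓ, by linarith⟩, rfl⟩
    rw [← Set.ncard_coe_finset, ← himg, Set.ncard_image_of_injOn hinj]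
  have hcast : ∀ a b : ℤ, (a : ZMod 2) = (b : ZMod 2) → a ≡ b [ZMOD 2] := by
    intro a b h
    have := (ZMod.intCast_eq_intCast_iff a b 2).mp h
    exact_mod_cast this
  refine hcast _ _ ?_
  rw [finsum_eq_sum_of_support_subset _ hsupp]
  rw [cardA, cardB, Finset.card_filter, Finset.card_filter]
  push_cast
  rw [← Finset.sum_add_distrib]
  refine Finset.sum_congr rfl fun k _ => ?_
  rw [sigmaOdd_cast]
end

section
/- If m is a positive integer such that for all positive integers n not of the form P_5(j), the sum ∑_{k ∈ ℤ} σ_odd(n - P_5(k)) ≡ 0 (mod m), then m ∈ {1, 2, 3, 6}. -/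
lemma Pgon5 (k : ℤ) : Pgon 5 k = (3 * k ^ 2 - k) / 2 := by
  unfold Pgon; norm_num

lemma sum3 : ∑ᶠ k : ℤ, sigmaOdd (3 - Pgon 5 k) = 6 := by
  have hsub : ∀ k : ℤ, k ∉ ({-1, 0, 1} : Finset ℤ) → sigmaOdd (3 - Pgon 5 k) = 0 := by
    intro k hk
    simp only [Finset.mem_insert, Finset.mem_singleton] at hk
    have hk' : k ≤ -2 ∨ 2 ≤ k := by omega
    have h3 : (3 : ℤ) ≤ Pgon 5 k := by
      rw [Pgon5, Int.le_ediv_iff_mul_le (by norm_num : (0:ℤ) < 2)]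
      rcases hk' with h | h <;> nlinarith
    unfold sigmaOdd
    rw [if_neg (by omega)]
  have hss : Function.support (fun k : ℤ => sigmaOdd (3 - Pgon 5 k))
      ⊆ (({-1, 0, 1} : Finset ℤ) : Set ℤ) := by
    intro k hk
    by_contra hc
    exact hk (hsub k (by simpa using hc))
  rw [finsum_eq_finset_sum_of_support_subset _ hss]
  decide

lemma not_pent : ¬ ∃ j : ℤ, Pgon 5 j = 3 := by
  rintro ⟨j, hj⟩
  rw [Pgon5] at hj
  have hdvd : (2 : ℤ) ∣ 3 * j ^ 2 - j := by
    rcases Int.even_or_odd j with ⟨t, ht⟩ | ⟨t, ht⟩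
    · exact ⟨6 * t ^ 2 - t, by subst ht; ring⟩
    · exact ⟨6 * t ^ 2 + 5 * t + 1, by subst ht; ring⟩
  have heq : 3 * j ^ 2 - j = 6 := by
    have := Int.ediv_mul_cancel hdvd
    omega
  have : j ≤ -2 ∨ j = -1 ∨ j = 0 ∨ j = 1 ∨ 2 ≤ j := by omega
  rcases this with h | h | h | h | h <;> first | (subst h; norm_num at heq) | nlinarith

theorem conj_two_only_if (m : ℕ) (hm : 0 < m)
    (h : ∀ n : ℤ, 0 < n → (¬ ∃ j : ℤ, Pgon 5 j = n) →
      (m : ℤ) ∣ ∑ᶠ k : ℤ, sigmaOdd (n - Pgon 5 k)) :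
    m ∈ ({1, 2, 3, 6} : Set ℕ) := by
  have h6 : (m : ℤ) ∣ 6 := by
    have := h 3 (by norm_num) not_pent
    rwa [sum3] at this
  have h6' : m ∣ 6 := by exact_mod_cast h6
  have hle : m ≤ 6 := Nat.le_of_dvd (by norm_num) h6'
  interval_cases m <;> simp_all <;> omega
end

section
/- If m is a positive integer such that for all positive integers n not of the form P_5(j), the alternating sum ∑_{k ∈ ℤ} (-1)^{P_3(-k)} σ_odd(n - P_5(k)) ≡ 0 (mod m), then m ∈ {1, 2, 4}. -/
lemma pgon5_big (k : ℤ) (hk : 2 ≤ k ∨ k ≤ -2) : 4 ≤ Pgon 5 k := by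
  have h6 : 4 * 2 ≤ (5 - 2) * k ^ 2 - (5 - 4) * k := by
    rcases hk with hk | hk <;> nlinarith [sq_nonneg (k - 2), sq_nonneg (k + 2)]
  have := Int.le_ediv_iff_mul_le (a := 4) (b := (5 - 2) * k ^ 2 - (5 - 4) * k)
    (c := 2) (by norm_num)
  unfold Pgon
  rw [this]
  omega

theorem conj_three_only_if (m : ℕ) (hm : 0 < m)
    (h : ∀ n : ℤ, 0 < n → (¬ ∃ j : ℤ, Pgon 5 j = n) →
      (m : ℤ) ∣ ∑ᶠ k : ℤ, (-1 : ℤ) ^ (Pgon 3 (-k)).toNat * sigmaOdd (n - Pgon 5 k)) :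
    m ∈ ({1, 2, 4} : Set ℕ) := by
  have hnp : ¬ ∃ j : ℤ, Pgon 5 j = 3 := by
    rintro ⟨j, hj⟩
    have hcase : j = -1 ∨ j = 0 ∨ j = 1 ∨ (2 ≤ j ∨ j ≤ -2) := by omega
    rcases hcase with rfl | rfl | rfl | hc
    · exact absurd hj (by decide)
    · exact absurd hj (by decide)
    · exact absurd hj (by decide)
    · have := pgon5_big j hc; omega
  have hd := h 3 (by norm_num) hnp
  set f : ℤ → ℤ := fun k => (-1 : ℤ) ^ (Pgon 3 (-k)).toNat * sigmaOdd (3 - Pgon 5 k) with hf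
  have hsupp : Function.support f ⊆ (({-1, 0, 1} : Finset ℤ) : Set ℤ) := by
    intro k hk
    simp only [Function.mem_support] at hk
    by_contra hmem
    simp only [Finset.coe_insert, Finset.coe_singleton, Set.mem_insert_iff,
      Set.mem_singleton_iff] at hmem
    push_neg at hmem
    have hbig : 4 ≤ Pgon 5 k := pgon5_big k (by omega)
    apply hk
    have : sigmaOdd (3 - Pgon 5 k) = 0 := by
      unfold sigmaOdd; rw [if_neg]; omega
    simp [hf, this]
  have hsum : ∑ᶠ k : ℤ, f k = 4 := by
    rw [finsum_eq_finset_sum_of_support_subset f hsupp]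
    decide +kernel
  rw [hsum] at hd
  have h4 : m ∣ 4 := by exact_mod_cast hd
  have hle : m ≤ 4 := Nat.le_of_dvd (by norm_num) h4
  interval_cases m <;> simp_all <;> omega
end

section
/- For every nonnegative integer n, ∑_{k ∈ ℤ} (-1)^k p(n - P_5(k)) = δ_{0,n}, where p is the partition function (with p of a negative integer defined to be 0) and P_5(k) = (3k² - k)/2. -/
/-- The partition function, extended by  to negative integers. -/
def partFun (n : ℤ) : ℤ :=
  if 0 ≤ n then (Fintype.card (Nat.Partition n.toNat) : ℤ) else 0

open Multiset

namespace PNTaux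

/-! ### Arithmetic facts about pentagonal numbers -/

lemma two_pgon (k : ℤ) : 2 * Pgon 5 k = 3 * k ^ 2 - k := by
  have he : Even (3 * k ^ 2 - k) := by
    rcases Int.even_or_odd k with ⟨c, hc⟩ | ⟨c, hc⟩
    · exact ⟨6 * c ^ 2 - c, by subst hc; ring⟩
    · exact ⟨6 * c ^ 2 + 5 * c + 1, by subst hc; ring⟩
  have h53 : (5 - 2 : ℤ) * k ^ 2 - (5 - 4) * k = 3 * k ^ 2 - k := by ring
  rw [Pgon, h53, Int.two_mul_ediv_two_of_even he]

lemma pgon_succ (k : ℤ) : Pgon 5 (k + 1) = Pgon 5 k + 3 * k + 1 := by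
  have h1 := two_pgon k
  have h2 := two_pgon (k + 1)
  nlinarith [h1, h2]

lemma pgon_pred (k : ℤ) : Pgon 5 (k - 1) = Pgon 5 k - 3 * k + 2 := by
  have h := pgon_succ (k - 1)
  rw [sub_add_cancel] at h
  linarith

lemma le_pgon_self (k : ℤ) : k ≤ Pgon 5 k := by
  have := two_pgon k
  nlinarith [sq_nonneg (k - 1), sq_nonneg k]

lemma neg_le_pgon_self (k : ℤ) : -k ≤ Pgon 5 k := by
  have := two_pgon k
  nlinarith [sq_nonneg (k + 1), sq_nonneg k]

/-! ### Multiset helper lemmas -/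

lemma sup_mem_nat (s : Multiset ℕ) (h : s ≠ 0) : s.sup ∈ s := by
  induction s using Multiset.induction_on with
  | empty => exact absurd rfl h
  | cons a t ih =>
    rw [Multiset.sup_cons]
    rcases eq_or_ne t 0 with rfl | ht
    · simp
    · rcases le_total a t.sup with hle | hle
      · rw [sup_eq_right.2 hle]; exact Multiset.mem_cons_of_mem (ih ht)
      · rw [sup_eq_left.2 hle]; exact Multiset.mem_cons_self a t

lemma sum_map_succ (s : Multiset ℕ) : (s.map (· + 1)).sum = s.sum + Multiset.card s := by
  induction s using Multiset.induction_on with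
  | empty => simp
  | cons a t ih =>
    simp only [Multiset.map_cons, Multiset.sum_cons, Multiset.card_cons, ih]
    omega

lemma sum_map_pred (s : Multiset ℕ) (hs : ∀ i ∈ s, 0 < i) :
    (((s.map (· - 1)).sum : ℕ) : ℤ) = (s.sum : ℤ) - Multiset.card s := by
  induction s using Multiset.induction_on with
  | empty => simp
  | cons a t ih =>
    have ha : 0 < a := hs a (Multiset.mem_cons_self a t)
    have ht : ∀ i ∈ t, 0 < i := fun i hi => hs i (Multiset.mem_cons_of_mem hi)
    rw [Multiset.map_cons, Multiset.sum_cons, Nat.cast_add, ih ht]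
    rw [Multiset.sum_cons, Multiset.card_cons]
    omega

lemma sum_filter_ne_zero (s : Multiset ℕ) : (s.filter (· ≠ 0)).sum = s.sum := by
  conv_rhs => rw [← Multiset.filter_add_not (· ≠ 0) s]
  rw [Multiset.sum_add]
  have : (s.filter (fun a => ¬ a ≠ 0)).sum = 0 := by
    rw [Multiset.sum_eq_zero]
    intro x hx
    have := Multiset.of_mem_filter hx
    omega
  omega

lemma erase_add_singleton (s : Multiset ℕ) (a : ℕ) : (s + {a}).erase a = s := by
  rw [add_comm, Multiset.singleton_add, Multiset.erase_cons_head]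

/-! ### The moves of the Bressoud–Zeilberger involution -/

/-- Condition for the "A move". -/
def Ac (k : ℤ) (P : Multiset ℕ) : Prop :=
  3 * k + max (Multiset.card P : ℤ) 1 ≤ (P.sup : ℤ)

instance (k : ℤ) (P : Multiset ℕ) : Decidable (Ac k P) := by unfold Ac; infer_instance

/-- The A move on multisets: remove the largest part `a`, add 1 to every remaining part,
and append `a - 3k - max r 1` ones. -/
def AM (k : ℤ) (P : Multiset ℕ) : Multiset ℕ :=
  (P.erase P.sup).map (· + 1) +
    Multiset.replicate ((P.sup : ℤ) - 3 * k - max (Multiset.card P : ℤ) 1).toNat 1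

/-- The B move on multisets: subtract 1 from every part (dropping parts that become 0 via
the later `ofSums` filtering) and add a new part `3k + r - 2`. -/
def BM (k : ℤ) (P : Multiset ℕ) : Multiset ℕ :=
  P.map (· - 1) + {(3 * k + (Multiset.card P : ℤ) - 2).toNat}

lemma AM_pos (k : ℤ) (P : Multiset ℕ) : ∀ i ∈ AM k P, 0 < i := by
  intro i hi
  rw [AM, Multiset.mem_add] at hi
  rcases hi with hi | hi
  · obtain ⟨x, -, rfl⟩ := Multiset.mem_map.1 hi
    omega
  · rw [Multiset.eq_of_mem_replicate hi]; omega

lemma AM_sum (k : ℤ) (P : Multiset ℕ) (h : Ac k P) :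
    ((AM k P).sum : ℤ) = (P.sum : ℤ) - 3 * k - 1 := by
  rcases eq_or_ne P 0 with rfl | hP
  · rw [Ac] at h
    rw [AM]
    simp only [Multiset.erase_zero, Multiset.map_zero, zero_add, Multiset.sum_replicate,
      smul_eq_mul, mul_one, Multiset.card_zero, Multiset.sup_zero, Multiset.sum_zero,
      Nat.bot_eq_zero, Nat.cast_zero] at h ⊢
    push_cast
    omega
  · have hmem : P.sup ∈ P := sup_mem_nat P hP
    have hcard : 0 < Multiset.card P := Multiset.card_pos.2 hP
    have hle : P.sup ≤ P.sum := Multiset.single_le_sum (fun x _ => Nat.zero_le x) _ hmem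
    have hsum_erase : P.sup + (P.erase P.sup).sum = P.sum := Multiset.sum_erase hmem
    have hcard_erase : Multiset.card (P.erase P.sup) = Multiset.card P - 1 :=
      Multiset.card_erase_of_mem hmem
    rw [Ac] at h
    rw [AM, Multiset.sum_add, sum_map_succ, Multiset.sum_replicate, smul_eq_mul, mul_one]
    omega

lemma BM_sum (k : ℤ) (P : Multiset ℕ) (hP : ∀ i ∈ P, 0 < i)
    (h : 0 ≤ 3 * k + (Multiset.card P : ℤ) - 2) :
    ((BM k P).sum : ℤ) = (P.sum : ℤ) + 3 * k - 2 := by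
  rw [BM, Multiset.sum_add, Multiset.sum_singleton, Nat.cast_add]
  rw [sum_map_pred P hP]
  omega

lemma AM_card (k : ℤ) (P : Multiset ℕ) (h : Ac k P) :
    ((Multiset.card (AM k P)) : ℤ) = (P.sup : ℤ) - 3 * k - 1 := by
  rcases eq_or_ne P 0 with rfl | hP
  · rw [Ac] at h
    rw [AM]
    simp only [Multiset.erase_zero, Multiset.map_zero, zero_add, Multiset.card_replicate,
      Multiset.card_zero, Multiset.sup_zero, Nat.bot_eq_zero, Nat.cast_zero] at h ⊢
    omega
  · have hmem : P.sup ∈ P := sup_mem_nat P hP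
    have hcard : 0 < Multiset.card P := Multiset.card_pos.2 hP
    have hcard_erase : Multiset.card (P.erase P.sup) = Multiset.card P - 1 :=
      Multiset.card_erase_of_mem hmem
    rw [Ac] at h
    rw [AM, Multiset.card_add, Multiset.card_map, Multiset.card_replicate]
    omega

lemma AM_sup_le (k : ℤ) (P : Multiset ℕ) : (AM k P).sup ≤ P.sup + 1 := by
  rw [AM]
  apply Multiset.sup_le.2
  intro b hb
  rw [Multiset.mem_add] at hb
  rcases hb with hb | hb
  · obtain ⟨x, hx, rfl⟩ := Multiset.mem_map.1 hb
    have : x ≤ P.sup := Multiset.le_sup (Multiset.mem_of_mem_erase hx)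
    omega
  · rw [Multiset.eq_of_mem_replicate hb]; omega

lemma not_Ac_AM (k : ℤ) (P : Multiset ℕ) (h : Ac k P) : ¬ Ac (k + 1) (AM k P) := by
  intro hc
  rw [Ac] at hc
  have hcard := AM_card k P h
  have hsup := AM_sup_le k P
  rcases Nat.eq_zero_or_pos (Multiset.card (AM k P)) with h0 | h0
  · rw [Multiset.card_eq_zero] at h0
    rw [h0] at hc
    simp only [Multiset.card_zero, Multiset.sup_zero, Nat.bot_eq_zero, Nat.cast_zero] at hc
    rw [h0] at hcard
    simp only [Multiset.card_zero, Nat.cast_zero] at hcard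
    have hsupnn : (0:ℤ) ≤ (P.sup : ℤ) := by positivity
    omega
  · have hsup' : ((AM k P).sup : ℤ) ≤ (P.sup : ℤ) + 1 := by exact_mod_cast hsup
    omega

lemma map_pred_AM (k : ℤ) (P : Multiset ℕ) :
    (AM k P).map (· - 1) = P.erase P.sup +
      Multiset.replicate ((P.sup : ℤ) - 3 * k - max (Multiset.card P : ℤ) 1).toNat 0 := by
  rw [AM, Multiset.map_add, Multiset.map_map, Multiset.map_replicate]
  congr 1
  · rw [show ((fun x => x - 1) ∘ (fun x : ℕ => x + 1)) = id by funext x; simp]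
    exact Multiset.map_id _

lemma BM_of_AM (k : ℤ) (P : Multiset ℕ) (h : Ac k P) (hP : ∀ i ∈ P, 0 < i) :
    (BM (k + 1) (AM k P)).filter (· ≠ 0) = P := by
  have hcard := AM_card k P h
  have hval : (3 * (k + 1) + (Multiset.card (AM k P) : ℤ) - 2) = (P.sup : ℤ) := by omega
  rw [BM, hval, Multiset.filter_add, map_pred_AM k P, Multiset.filter_add]
  have h1 : Multiset.filter (· ≠ 0) (P.erase P.sup) = P.erase P.sup := by
    rw [Multiset.filter_eq_self]
    intro a ha
    exact (hP a (Multiset.mem_of_mem_erase ha)).ne'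
  have h2 : Multiset.filter (· ≠ 0)
      (Multiset.replicate ((P.sup : ℤ) - 3 * k - max (Multiset.card P : ℤ) 1).toNat 0)
      = 0 := by
    rw [Multiset.filter_eq_nil]
    intro a ha
    rw [Multiset.eq_of_mem_replicate ha]
    simp
  rw [h1, h2, add_zero]
  rw [Int.toNat_natCast]
  rcases eq_or_ne P 0 with rfl | hPne
  · simp [Multiset.filter_singleton]
  · have hmem : P.sup ∈ P := sup_mem_nat P hPne
    have hpos : 0 < P.sup := hP _ hmem
    have h3 : Multiset.filter (· ≠ 0) ({P.sup} : Multiset ℕ) = {P.sup} := by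
      rw [Multiset.filter_eq_self]
      intro a ha
      rw [Multiset.mem_singleton] at ha
      omega
    rw [h3, add_comm, Multiset.singleton_add, Multiset.cons_erase hmem]

lemma filt_map (P : Multiset ℕ) (hP : ∀ i ∈ P, 0 < i) :
    (P.map (· - 1)).filter (· ≠ 0) = (P.filter (· ≠ 1)).map (· - 1) := by
  rw [Multiset.filter_map]
  congr 1
  apply Multiset.filter_congr
  intro x hx
  have := hP x hx
  simp only [Function.comp_apply, ne_eq]
  omega

lemma map_succ_filt (P : Multiset ℕ) (hP : ∀ i ∈ P, 0 < i) :
    ((P.filter (· ≠ 1)).map (· - 1)).map (· + 1) = P.filter (· ≠ 1) := by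
  rw [Multiset.map_map]
  have : ∀ x ∈ P.filter (· ≠ 1), ((fun x => x + 1) ∘ (fun x : ℕ => x - 1)) x = id x := by
    intro x hx
    have h1 := hP x (Multiset.mem_of_mem_filter hx)
    have h2 := Multiset.of_mem_filter hx
    simp only [Function.comp_apply, id_eq]
    omega
  rw [Multiset.map_congr rfl this, Multiset.map_id]

lemma P_split (P : Multiset ℕ) :
    P.filter (· ≠ 1) + Multiset.replicate (Multiset.count 1 P) 1 = P := by
  have h1 : Multiset.replicate (Multiset.count 1 P) 1 = P.filter (· = 1) :=
    (Multiset.filter_eq' P 1).symm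
  rw [h1]
  have h2 : P.filter (· = 1) = P.filter (fun a => ¬ a ≠ 1) := by
    apply Multiset.filter_congr
    intro x _
    simp
  rw [h2]
  exact Multiset.filter_add_not _ P

lemma AM_of_BM (k : ℤ) (P : Multiset ℕ) (hP : ∀ i ∈ P, 0 < i)
    (hB0 : 0 ≤ 3 * k + (Multiset.card P : ℤ) - 2)
    (hBa : (P.sup : ℤ) ≤ 3 * k + (Multiset.card P : ℤ) - 1) :
    Ac (k - 1) ((BM k P).filter (· ≠ 0)) ∧
      AM (k - 1) ((BM k P).filter (· ≠ 0)) = P := by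
  set r := Multiset.card P with hr
  set t := (3 * k + (r : ℤ) - 2).toNat with ht
  have htz : (t : ℤ) = 3 * k + (r : ℤ) - 2 := Int.toNat_of_nonneg hB0
  have hQ : (BM k P).filter (· ≠ 0) =
      (P.map (· - 1)).filter (· ≠ 0) + ({t} : Multiset ℕ).filter (· ≠ 0) := by
    rw [BM, Multiset.filter_add]
  have hPm1 : (P.map (· - 1)).filter (· ≠ 0) = (P.filter (· ≠ 1)).map (· - 1) :=
    filt_map P hP
  set q := Multiset.card (P.filter (· ≠ 1)) with hq
  have hqr : q ≤ r := Multiset.card_le_card (Multiset.filter_le _ P)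
  have hcount : q + Multiset.count 1 P = r := by
    have := congrArg Multiset.card (P_split P)
    simpa [hq, hr] using this
  have hPm1card : Multiset.card ((P.map (· - 1)).filter (· ≠ 0)) = q := by
    rw [hPm1, Multiset.card_map]
  have hPm1le : ∀ x ∈ (P.map (· - 1)).filter (· ≠ 0), x ≤ t := by
    intro x hx
    have hx' := Multiset.mem_of_mem_filter hx
    obtain ⟨y, hy, rfl⟩ := Multiset.mem_map.1 hx'
    have hys : y ≤ P.sup := Multiset.le_sup hy
    have : (y : ℤ) ≤ 3 * k + (r : ℤ) - 1 := by
      calc (y : ℤ) ≤ (P.sup : ℤ) := by exact_mod_cast hys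
        _ ≤ _ := hBa
    omega
  rcases lt_or_ge 0 (3 * k + (r : ℤ) - 2) with hpos | hle
  · -- t ≥ 1
    have ht1 : 1 ≤ t := by omega
    have hft : ({t} : Multiset ℕ).filter (· ≠ 0) = {t} := by
      rw [Multiset.filter_eq_self]
      intro a ha
      rw [Multiset.mem_singleton] at ha
      omega
    rw [hQ, hft]
    set Q := (P.map (· - 1)).filter (· ≠ 0) + ({t} : Multiset ℕ) with hQdef
    have hcardQ : Multiset.card Q = q + 1 := by
      rw [hQdef, Multiset.card_add, hPm1card, Multiset.card_singleton]
    have hsupQ : Q.sup = t := by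
      rw [hQdef, Multiset.sup_add, Multiset.sup_singleton]
      apply sup_eq_right.2
      apply Multiset.sup_le.2
      intro b hb
      exact hPm1le b hb
    have hAc : Ac (k - 1) Q := by
      rw [Ac, hsupQ, hcardQ]
      have : max ((q:ℤ) + 1) 1 = (q:ℤ) + 1 := by omega
      push_cast
      omega
    refine ⟨hAc, ?_⟩
    rw [AM, hsupQ, hcardQ]
    have herase : Q.erase t = (P.map (· - 1)).filter (· ≠ 0) := by
      rw [hQdef]
      exact erase_add_singleton _ t
    rw [herase, hPm1, map_succ_filt P hP]
    have hrep : ((t : ℤ) - 3 * (k - 1) - max ((q + 1 : ℕ) : ℤ) 1).toNat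
        = Multiset.count 1 P := by
      have : max ((q + 1 : ℕ) : ℤ) 1 = (q : ℤ) + 1 := by push_cast; omega
      rw [this]
      omega
    rw [hrep]
    exact P_split P
  · -- mB = 0, so t = 0, all parts are 1
    have hmb : 3 * k + (r : ℤ) - 2 = 0 := le_antisymm hle hB0
    have ht0 : t = 0 := by omega
    have hall : ∀ y ∈ P, y = 1 := by
      intro y hy
      have h1 := hP y hy
      have hys : y ≤ P.sup := Multiset.le_sup hy
      have : (P.sup : ℤ) ≤ 1 := by omega
      have : (y : ℤ) ≤ 1 := by
        calc (y:ℤ) ≤ (P.sup : ℤ) := by exact_mod_cast hys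
          _ ≤ 1 := this
      omega
    have hPrep : P = Multiset.replicate r 1 := by
      rw [Multiset.eq_replicate]
      exact ⟨rfl, hall⟩
    have hQ0 : (BM k P).filter (· ≠ 0) = 0 := by
      rw [hQ, ht0]
      have h1 : (P.map (· - 1)).filter (· ≠ 0) = 0 := by
        rw [Multiset.filter_eq_nil]
        intro a ha
        obtain ⟨y, hy, rfl⟩ := Multiset.mem_map.1 ha
        rw [hall y hy]
        simp
      rw [h1]
      simp [Multiset.filter_singleton]
    rw [hQ0]
    constructor
    · rw [Ac]
      simp only [Multiset.card_zero, Multiset.sup_zero, Nat.bot_eq_zero, Nat.cast_zero]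
      omega
    · rw [AM]
      simp only [Multiset.erase_zero, Multiset.map_zero, zero_add, Multiset.card_zero,
        Multiset.sup_zero, Nat.bot_eq_zero, Nat.cast_zero]
      rw [hPrep]
      have : ((0 : ℤ) - 3 * (k - 1) - max (0:ℤ) 1).toNat = r := by omega
      rw [this]

/-! ### The involution on pairs (k, partition of n - P₅(k)) -/

/-- `mP n k` is `n - P₅(k)`, truncated at `0`. -/
abbrev mP (n : ℕ) (k : ℤ) : ℕ := ((n : ℤ) - Pgon 5 k).toNat

/-- The Bressoud–Zeilberger involution. -/
def Phi (n : ℕ) (x : Σ k : ℤ, Nat.Partition (mP n k)) : Σ k : ℤ, Nat.Partition (mP n k) :=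
  if h : Ac x.1 x.2.parts ∧ (AM x.1 x.2.parts).sum = mP n (x.1 + 1) then
    ⟨x.1 + 1, Nat.Partition.ofSums _ _ h.2⟩
  else if h' : (BM x.1 x.2.parts).sum = mP n (x.1 - 1) then
    ⟨x.1 - 1, Nat.Partition.ofSums _ _ h'⟩
  else x

lemma parts_sum_int (n : ℕ) (k : ℤ) (p : Nat.Partition (mP n k)) (hk : Pgon 5 k ≤ (n : ℤ)) :
    (p.parts.sum : ℤ) = (n : ℤ) - Pgon 5 k := by
  have h := p.parts_sum
  have h2 : ((mP n k : ℕ) : ℤ) = (n : ℤ) - Pgon 5 k := Int.toNat_of_nonneg (by omega)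
  rw [h]
  exact h2

lemma parts_pos' (n : ℕ) (k : ℤ) (p : Nat.Partition (mP n k)) : ∀ i ∈ p.parts, 0 < i :=
  fun _ hi => p.parts_pos hi

/-- In the A case, the sum condition of the first branch of `Phi` holds. -/
lemma A_sum_cond (n : ℕ) (k : ℤ) (p : Nat.Partition (mP n k))
    (hk : Pgon 5 k ≤ (n : ℤ)) (hA : Ac k p.parts) :
    Pgon 5 (k + 1) ≤ (n : ℤ) ∧ (AM k p.parts).sum = mP n (k + 1) := by
  have hs := AM_sum k p.parts hA
  rw [parts_sum_int n k p hk] at hs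
  have hsucc := pgon_succ k
  have hnn : (0 : ℤ) ≤ ((AM k p.parts).sum : ℤ) := by positivity
  constructor
  · omega
  · have : ((mP n (k+1) : ℕ) : ℤ) = ((AM k p.parts).sum : ℤ) := by
      rw [Int.toNat_of_nonneg (by omega)]
      omega
    exact_mod_cast this.symm

/-- In the B case (¬Ac, with n > 0), the B preconditions hold. -/
lemma B_conds (n : ℕ) (k : ℤ) (p : Nat.Partition (mP n k)) (hn : 0 < n)
    (hk : Pgon 5 k ≤ (n : ℤ)) (hnA : ¬ Ac k p.parts) :
    0 ≤ 3 * k + (Multiset.card p.parts : ℤ) - 2 ∧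
      (p.parts.sup : ℤ) ≤ 3 * k + (Multiset.card p.parts : ℤ) - 1 := by
  rw [Ac, not_le] at hnA
  rcases eq_or_ne p.parts 0 with h0 | h0
  · have hsum := parts_sum_int n k p hk
    rw [h0] at hsum hnA ⊢
    simp only [Multiset.sum_zero, Multiset.card_zero, Multiset.sup_zero, Nat.bot_eq_zero,
      Nat.cast_zero] at hsum hnA ⊢
    -- hsum : 0 = n - Pgon 5 k, so n = Pgon 5 k > 0, so k ≠ 0
    have hk0 : k ≠ 0 := by
      intro hk0
      rw [hk0] at hsum
      have : Pgon 5 0 = 0 := by norm_num [Pgon]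
      omega
    -- hnA : 0 < 3k + max 0 1 = 3k + 1, so k ≥ 0, hence k ≥ 1
    omega
  · have hmem : p.parts.sup ∈ p.parts := sup_mem_nat _ h0
    have hpos : 0 < p.parts.sup := parts_pos' n k p _ hmem
    have hcard : 0 < Multiset.card p.parts := Multiset.card_pos.2 h0
    have hmax : max (Multiset.card p.parts : ℤ) 1 = (Multiset.card p.parts : ℤ) := by
      omega
    rw [hmax] at hnA
    omega

/-- In the B case, the sum condition of the second branch of `Phi` holds. -/
lemma B_sum_cond (n : ℕ) (k : ℤ) (p : Nat.Partition (mP n k)) (hn : 0 < n)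
    (hk : Pgon 5 k ≤ (n : ℤ)) (hnA : ¬ Ac k p.parts) :
    Pgon 5 (k - 1) ≤ (n : ℤ) ∧ (BM k p.parts).sum = mP n (k - 1) := by
  obtain ⟨hB0, _⟩ := B_conds n k p hn hk hnA
  have hs := BM_sum k p.parts (parts_pos' n k p) hB0
  rw [parts_sum_int n k p hk] at hs
  have hpred := pgon_pred k
  have hnn : (0 : ℤ) ≤ ((BM k p.parts).sum : ℤ) := by positivity
  constructor
  · omega
  · have : ((mP n (k-1) : ℕ) : ℤ) = ((BM k p.parts).sum : ℤ) := by
      rw [Int.toNat_of_nonneg (by omega)]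
      omega
    exact_mod_cast this.symm

lemma Phi_master (n : ℕ) (k : ℤ) (p : Nat.Partition (mP n k)) (hn : 0 < n)
    (hk : Pgon 5 k ≤ (n : ℤ)) :
    ((Phi n ⟨k, p⟩).1 = k + 1 ∨ (Phi n ⟨k, p⟩).1 = k - 1) ∧
      Pgon 5 (Phi n ⟨k, p⟩).1 ≤ (n : ℤ) ∧ Phi n (Phi n ⟨k, p⟩) = ⟨k, p⟩ := by
  by_cases hA : Ac k p.parts
  · -- A branch
    obtain ⟨hk1, hsum⟩ := A_sum_cond n k p hk hA
    have hbranch : Phi n ⟨k, p⟩ = ⟨k + 1, Nat.Partition.ofSums _ (AM k p.parts) hsum⟩ := by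
      rw [Phi]
      rw [dif_pos ⟨hA, hsum⟩]
    set q := Nat.Partition.ofSums _ (AM k p.parts) hsum with hq
    have hqparts : q.parts = AM k p.parts := by
      rw [hq, Nat.Partition.ofSums_parts]
      exact Multiset.filter_eq_self.2 (fun a ha => (AM_pos k p.parts a ha).ne')
    refine ⟨Or.inl (by rw [hbranch]), by rw [hbranch]; exact hk1, ?_⟩
    rw [hbranch]
    -- second application: B branch
    have hnA2 : ¬ Ac (k + 1) q.parts := by rw [hqparts]; exact not_Ac_AM k p.parts hA
    have hfilt : (BM (k + 1) q.parts).filter (· ≠ 0) = p.parts := by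
      rw [hqparts]; exact BM_of_AM k p.parts hA (parts_pos' n k p)
    have hsum2 : (BM (k + 1) q.parts).sum = mP n k := by
      have := sum_filter_ne_zero (BM (k + 1) q.parts)
      rw [hfilt] at this
      rw [← this]
      exact p.parts_sum
    have hsum2' : (BM (k + 1) q.parts).sum = mP n ((k + 1) - 1) := by
      rw [show k + 1 - 1 = k by ring]
      exact hsum2
    rw [Phi]
    rw [dif_neg (by rintro ⟨hA2, -⟩; exact hnA2 hA2)]
    rw [dif_pos hsum2']
    -- now show the resulting sigma equals ⟨k, p⟩
    have hgen : ∀ (j : ℤ) (hj : j = k) (hs : (BM (k + 1) q.parts).sum = mP n j),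
        (⟨j, Nat.Partition.ofSums _ (BM (k + 1) q.parts) hs⟩ :
          Σ k : ℤ, Nat.Partition (mP n k)) = ⟨k, p⟩ := by
      rintro j rfl hs
      refine congrArg (Sigma.mk j) ?_
      apply Nat.Partition.ext
      rw [Nat.Partition.ofSums_parts]
      exact hfilt
    exact hgen (k + 1 - 1) (by ring) hsum2'
  · -- B branch
    obtain ⟨hB0, hBa⟩ := B_conds n k p hn hk hA
    obtain ⟨hk1, hsum⟩ := B_sum_cond n k p hn hk hA
    have hbranch : Phi n ⟨k, p⟩ = ⟨k - 1, Nat.Partition.ofSums _ (BM k p.parts) hsum⟩ := by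
      rw [Phi]
      rw [dif_neg (by rintro ⟨hA2, -⟩; exact hA hA2)]
      rw [dif_pos hsum]
    set q := Nat.Partition.ofSums _ (BM k p.parts) hsum with hq
    have hqparts : q.parts = (BM k p.parts).filter (· ≠ 0) := by
      rw [hq, Nat.Partition.ofSums_parts]
    obtain ⟨hAc2, hAMeq⟩ := AM_of_BM k p.parts (parts_pos' n k p) hB0 hBa
    refine ⟨Or.inr (by rw [hbranch]), by rw [hbranch]; exact hk1, ?_⟩
    rw [hbranch]
    have hAc2' : Ac (k - 1) q.parts := by rw [hqparts]; exact hAc2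
    have hAMeq' : AM (k - 1) q.parts = p.parts := by rw [hqparts]; exact hAMeq
    have hsum2 : (AM (k - 1) q.parts).sum = mP n (k - 1 + 1) := by
      rw [hAMeq', show k - 1 + 1 = k by ring]
      exact p.parts_sum
    rw [Phi]
    rw [dif_pos ⟨hAc2', hsum2⟩]
    have hgen : ∀ (j : ℤ) (hj : j = k) (hs : (AM (k - 1) q.parts).sum = mP n j),
        (⟨j, Nat.Partition.ofSums _ (AM (k - 1) q.parts) hs⟩ :
          Σ k : ℤ, Nat.Partition (mP n k)) = ⟨k, p⟩ := by
      rintro j rfl hs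
      refine congrArg (Sigma.mk j) ?_
      apply Nat.Partition.ext
      rw [Nat.Partition.ofSums_parts, hAMeq']
      exact Multiset.filter_eq_self.2 (fun a ha => (p.parts_pos ha).ne')
    exact hgen (k - 1 + 1) (by ring) hsum2

/-! ### Final assembly -/

lemma sign_succ (k : ℤ) : ((-1 : ℤ)) ^ (k + 1).natAbs = -(-1 : ℤ) ^ k.natAbs := by
  rcases Int.even_or_odd k with he | ho
  · rw [Even.neg_one_pow (Int.natAbs_even.2 he), Odd.neg_one_pow (Int.natAbs_odd.2 he.add_one)]
  · rw [Odd.neg_one_pow (Int.natAbs_odd.2 ho), Even.neg_one_pow (Int.natAbs_even.2 ho.add_one)]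
    norm_num

/-- The finite set of `k` that can contribute. -/
noncomputable def Kf (n : ℕ) : Finset ℤ := (Finset.Icc (-(n : ℤ)) (n : ℤ)).filter (fun k => Pgon 5 k ≤ (n : ℤ))

lemma mem_Kf {n : ℕ} {k : ℤ} : k ∈ Kf n ↔ Pgon 5 k ≤ (n : ℤ) := by
  constructor
  · exact fun h => (Finset.mem_filter.1 h).2
  · intro h
    refine Finset.mem_filter.2 ⟨Finset.mem_Icc.2 ⟨?_, ?_⟩, h⟩
    · have := neg_le_pgon_self k; omega
    · have := le_pgon_self k; omega

lemma card_partition_zero : Fintype.card (Nat.Partition 0) = 1 := by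
  rw [Fintype.card_eq_one_iff]
  refine ⟨⟨0, fun {i} h => absurd h (Multiset.notMem_zero i), rfl⟩, ?_⟩
  intro y
  apply Nat.Partition.ext
  have hsum : y.parts.sum = 0 := y.parts_sum
  apply Multiset.eq_zero_of_forall_notMem
  intro a ha
  have h1 : 0 < a := y.parts_pos ha
  have h2 : a = 0 := (Multiset.sum_eq_zero_iff.1 hsum) a ha
  omega

end PNTaux

open PNTaux in
theorem pentagonal_number_theorem_recurrence (n : ℕ) :
    ∑ᶠ k : ℤ, (-1 : ℤ) ^ k.natAbs * partFun ((n : ℤ) - Pgon 5 k) =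
      if n = 0 then 1 else 0 := by
  classical
  have hsupp : Function.support (fun k : ℤ => (-1 : ℤ) ^ k.natAbs * partFun ((n : ℤ) - Pgon 5 k))
      ⊆ ↑(Kf n) := by
    intro k hk
    rw [Function.mem_support] at hk
    rw [Finset.mem_coe, mem_Kf]
    by_contra h
    rw [partFun, if_neg (by omega), mul_zero] at hk
    exact hk rfl
  rw [finsum_eq_sum_of_support_subset _ hsupp]
  have hterm : ∀ k ∈ Kf n, (-1 : ℤ) ^ k.natAbs * partFun ((n : ℤ) - Pgon 5 k)
      = ∑ _p : Nat.Partition (mP n k), (-1 : ℤ) ^ k.natAbs := by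
    intro k hk
    rw [partFun, if_pos (by have := mem_Kf.1 hk; omega)]
    rw [Finset.sum_const, Finset.card_univ, nsmul_eq_mul, mul_comm]
  rw [Finset.sum_congr rfl hterm, ← Finset.sum_sigma (Kf n) (fun _ => Finset.univ)
    (fun x => (-1 : ℤ) ^ x.1.natAbs)]
  by_cases hn : n = 0
  · subst hn
    rw [if_pos rfl]
    have hK : Kf 0 = {0} := by
      ext k
      rw [mem_Kf, Finset.mem_singleton]
      constructor
      · intro h
        have h1 := le_pgon_self k
        have h2 := neg_le_pgon_self k
        omega
      · rintro rfl
        norm_num [Pgon]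
    rw [hK, Finset.sum_sigma]
    rw [Finset.sum_singleton]
    simp only [Int.natAbs_zero, pow_zero]
    rw [Finset.sum_const, Finset.card_univ]
    have hm : mP 0 0 = 0 := by decide
    rw [hm, card_partition_zero]
    simp
  · rw [if_neg hn]
    have hn' : 0 < n := Nat.pos_of_ne_zero hn
    refine Finset.sum_involution (fun x _ => Phi n x) ?_ ?_ ?_ ?_
    · intro x ha
      have hk : Pgon 5 x.1 ≤ (n : ℤ) := mem_Kf.1 (Finset.mem_sigma.1 ha).1
      obtain ⟨hor, -, -⟩ := Phi_master n x.1 x.2 hn' hk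
      rcases hor with h | h
      · rw [h, sign_succ]; ring
      · have hs := sign_succ (x.1 - 1)
        rw [sub_add_cancel] at hs
        rw [h]
        linarith
    · intro x ha _
      have hk : Pgon 5 x.1 ≤ (n : ℤ) := mem_Kf.1 (Finset.mem_sigma.1 ha).1
      obtain ⟨hor, -, -⟩ := Phi_master n x.1 x.2 hn' hk
      intro heq
      have heq' : Phi n ⟨x.1, x.2⟩ = x := heq
      rw [heq'] at hor
      rcases hor with h | h <;> omega
    · intro x ha
      have hk : Pgon 5 x.1 ≤ (n : ℤ) := mem_Kf.1 (Finset.mem_sigma.1 ha).1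
      obtain ⟨-, hmem, -⟩ := Phi_master n x.1 x.2 hn' hk
      exact Finset.mem_sigma.2 ⟨mem_Kf.2 hmem, Finset.mem_univ _⟩
    · intro x ha
      have hk : Pgon 5 x.1 ≤ (n : ℤ) := mem_Kf.1 (Finset.mem_sigma.1 ha).1
      obtain ⟨-, -, hinv⟩ := Phi_master n x.1 x.2 hn' hk
      exact hinv
end
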